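/- In the universe D(A) generated by the closed set A of Left dead-ends, an augmented or ordinary game G is Left U-strong (Left wins moving first on G + X for every Left end X in the universe) if and only if Left wins moving first on G + X for every X in the n-th test set T_n(A), where n = fb(G) is the formal birthday of G and T_n(A) is the set of minimal elements (under the dead-end order) of {τ_n(X) : X in the additive-hereditary closure of A}. -/

import Mathlib

/-- A (finite) partizan game: finite lists of Left and Right options. -/
inductive Gm : Type where
  | node : List Gm → List Gm → Gm

/-- The Left options of a game. -/
def Gm.leftOpts : Gm → List Gm
  | .node l _ => l

/-- The Right options of a game. -/
def Gm.rightOpts : Gm → List Gm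
  | .node _ r => r

/-- Disjunctive sum of games. -/
def Gm.add : Gm → Gm → Gm
  | .node gl gr, .node hl hr =>
      .node
        (gl.attach.map (fun g => Gm.add g.1 (.node hl hr)) ++
         hl.attach.map (fun h => Gm.add (.node gl gr) h.1))
        (gr.attach.map (fun g => Gm.add g.1 (.node hl hr)) ++
         hr.attach.map (fun h => Gm.add (.node gl gr) h.1))
termination_by g h => sizeOf g + sizeOf h
decreasing_by
  all_goals first
  | (have := List.sizeOf_lt_of_mem g.2; simp; omega)
  | (have := List.sizeOf_lt_of_mem h.2; simp; omega)

mutual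
/-- Left, moving first, wins `G` under misère play (a player unable to move wins):
`G` is a Left end, or some Left option is a loss for Right moving first. -/
def Gm.lwins : Gm → Prop
  | .node l _ => l = [] ∨ ∃ g ∈ l.attach, ¬ Gm.rwins g.1
termination_by G => sizeOf G
decreasing_by have := List.sizeOf_lt_of_mem g.2; simp; omega

/-- Right, moving first, wins `G` under misère play. -/
def Gm.rwins : Gm → Prop
  | .node _ r => r = [] ∨ ∃ g ∈ r.attach, ¬ Gm.lwins g.1
termination_by G => sizeOf G
decreasing_by have := List.sizeOf_lt_of_mem g.2; simp; omega
end

/-- The game `0`. -/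
def Gm.zero : Gm := .node [] []

/-- The game `* = {0|0}`. -/
def Gm.star : Gm := .node [Gm.zero] [Gm.zero]

/-- `G` is a Left dead-end: `G` has no Left options, and every subposition
likewise has no Left options. -/
inductive Gm.IsLDE : Gm → Prop
  | mk (r : List Gm) : (∀ g ∈ r, Gm.IsLDE g) → Gm.IsLDE (.node [] r)

/-- The dead-end order on Left dead-ends: `G ≥ H` iff every Right option of `G`
is `≥` some Right option of `H`, and `G` having no Right options implies the
same of `H`. -/
def Gm.DGe : Gm → Gm → Prop
  | .node _ gr, .node _ hr =>
      (∀ g ∈ gr, ∃ h ∈ hr, Gm.DGe g h) ∧ (gr = [] → hr = [])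
termination_by G _ => sizeOf G
decreasing_by
  have := List.sizeOf_lt_of_mem ‹g ∈ gr›; simp; omega

/-- The formal birthday (height of the game tree). -/
def Gm.fb : Gm → ℕ
  | .node l r =>
      max (l.attach.foldr (fun g m => max (Gm.fb g.1 + 1) m) 0)
          (r.attach.foldr (fun g m => max (Gm.fb g.1 + 1) m) 0)
termination_by G => sizeOf G
decreasing_by
  all_goals (have := List.sizeOf_lt_of_mem g.2; simp; omega)

/-- The `n`-th truncation: stop play after `n` moves. -/
def Gm.trunc : ℕ → Gm → Gm
  | 0, _ => Gm.zero
  | n+1, .node l r => .node (l.map (Gm.trunc n)) (r.map (Gm.trunc n))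

/-- The additive-hereditary closure `cl(A)`: the smallest set containing `A`
that is hereditarily closed and closed under disjunctive sum. Its elements are
exactly the Left ends of the universe `D(A)`. -/
inductive Gm.cl (A : Set Gm) : Gm → Prop
  | base {X} : X ∈ A → Gm.cl A X
  | leftOpt {X g} : Gm.cl A X → g ∈ X.leftOpts → Gm.cl A g
  | rightOpt {X g} : Gm.cl A X → g ∈ X.rightOpts → Gm.cl A g
  | add {X Y} : Gm.cl A X → Gm.cl A Y → Gm.cl A (X.add Y)

lemma Gm.leftOpts_add (X Y : Gm) :
    (X.add Y).leftOpts = X.leftOpts.map (·.add Y) ++ Y.leftOpts.map (X.add ·) := by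
  cases X with | node gl gr => cases Y with | node hl hr =>
  rw [Gm.add]
  simp [Gm.leftOpts]

lemma Gm.rightOpts_add (X Y : Gm) :
    (X.add Y).rightOpts = X.rightOpts.map (·.add Y) ++ Y.rightOpts.map (X.add ·) := by
  cases X with | node gl gr => cases Y with | node hl hr =>
  rw [Gm.add]
  simp [Gm.rightOpts]

lemma Gm.lwins_iff (l r : List Gm) :
    Gm.lwins (.node l r) ↔ l = [] ∨ ∃ g ∈ l, ¬ Gm.rwins g := by
  rw [Gm.lwins]
  simp

lemma Gm.rwins_iff (l r : List Gm) :
    Gm.rwins (.node l r) ↔ r = [] ∨ ∃ g ∈ r, ¬ Gm.lwins g := by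
  rw [Gm.rwins]
  simp

lemma Gm.dge_iff (gl gr hl hr : List Gm) :
    Gm.DGe (.node gl gr) (.node hl hr) ↔
      (∀ g ∈ gr, ∃ h ∈ hr, Gm.DGe g h) ∧ (gr = [] → hr = []) := by
  rw [Gm.DGe]
lemma Gm.lwins_iff' (Z : Gm) :
    Z.lwins ↔ Z.leftOpts = [] ∨ ∃ g ∈ Z.leftOpts, ¬ Gm.rwins g := by
  cases Z with | node l r => exact Gm.lwins_iff l r

lemma Gm.rwins_iff' (Z : Gm) :
    Z.rwins ↔ Z.rightOpts = [] ∨ ∃ g ∈ Z.rightOpts, ¬ Gm.lwins g := by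
  cases Z with | node l r => exact Gm.rwins_iff l r

lemma Gm.lwins_add (G H : Gm) :
    (G.add H).lwins ↔ (G.leftOpts = [] ∧ H.leftOpts = []) ∨
      (∃ g ∈ G.leftOpts, ¬ Gm.rwins (g.add H)) ∨
      (∃ h ∈ H.leftOpts, ¬ Gm.rwins (G.add h)) := by
  rw [Gm.lwins_iff', Gm.leftOpts_add]
  simp only [List.append_eq_nil_iff, List.map_eq_nil_iff, List.mem_append, List.mem_map, or_assoc]
  apply or_congr Iff.rfl
  constructor
  · rintro ⟨k, (⟨a, ha, rfl⟩ | ⟨a, ha, rfl⟩), hk⟩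
    · exact Or.inl ⟨a, ha, hk⟩
    · exact Or.inr ⟨a, ha, hk⟩
  · rintro (⟨a, ha, hk⟩ | ⟨a, ha, hk⟩)
    · exact ⟨_, Or.inl ⟨a, ha, rfl⟩, hk⟩
    · exact ⟨_, Or.inr ⟨a, ha, rfl⟩, hk⟩

lemma Gm.rwins_add (G H : Gm) :
    (G.add H).rwins ↔ (G.rightOpts = [] ∧ H.rightOpts = []) ∨
      (∃ g ∈ G.rightOpts, ¬ Gm.lwins (g.add H)) ∨
      (∃ h ∈ H.rightOpts, ¬ Gm.lwins (G.add h)) := by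
  rw [Gm.rwins_iff', Gm.rightOpts_add]
  simp only [List.append_eq_nil_iff, List.map_eq_nil_iff, List.mem_append, List.mem_map, or_assoc]
  apply or_congr Iff.rfl
  constructor
  · rintro ⟨k, (⟨a, ha, rfl⟩ | ⟨a, ha, rfl⟩), hk⟩
    · exact Or.inl ⟨a, ha, hk⟩
    · exact Or.inr ⟨a, ha, hk⟩
  · rintro (⟨a, ha, hk⟩ | ⟨a, ha, hk⟩)
    · exact ⟨_, Or.inl ⟨a, ha, rfl⟩, hk⟩
    · exact ⟨_, Or.inr ⟨a, ha, rfl⟩, hk⟩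

lemma Gm.leftOpts_node (l r : List Gm) : (Gm.node l r).leftOpts = l := rfl
lemma Gm.rightOpts_node (l r : List Gm) : (Gm.node l r).rightOpts = r := rfl

lemma Gm.lde_leftOpts {X : Gm} (h : X.IsLDE) : X.leftOpts = [] := by
  cases h; rfl

lemma Gm.lde_rightOpts {X : Gm} (h : X.IsLDE) : ∀ g ∈ X.rightOpts, g.IsLDE := by
  cases h with | mk r hr => exact hr

lemma Gm.sizeOf_mem_left {g : Gm} {l r : List Gm} (h : g ∈ l) :
    sizeOf g < sizeOf (Gm.node l r) := by
  have := List.sizeOf_lt_of_mem h; simp; omega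

lemma Gm.sizeOf_mem_right {g : Gm} {l r : List Gm} (h : g ∈ r) :
    sizeOf g < sizeOf (Gm.node l r) := by
  have := List.sizeOf_lt_of_mem h; simp; omega

lemma Gm.lde_add : ∀ (X Y : Gm), X.IsLDE → Y.IsLDE → (X.add Y).IsLDE
  | .node gl gr, .node hl hr, hX, hY => by
    have hgl : gl = [] := by have := Gm.lde_leftOpts hX; simpa [Gm.leftOpts] using this
    have hhl : hl = [] := by have := Gm.lde_leftOpts hY; simpa [Gm.leftOpts] using this
    rw [Gm.add]
    subst hgl hhl
    simp only [List.attach_nil, List.map_nil, List.nil_append]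
    exact Gm.IsLDE.mk _ (by
      intro g hg
      simp only [List.mem_append, List.mem_map, List.mem_attach, true_and,
        Subtype.exists] at hg
      rcases hg with ⟨a, ha, rfl⟩ | ⟨a, ha, rfl⟩
      · exact Gm.lde_add a _ (Gm.lde_rightOpts hX a ha) hY
      · exact Gm.lde_add _ a hX (Gm.lde_rightOpts hY a ha))
termination_by X Y => sizeOf X + sizeOf Y
decreasing_by
  all_goals (subst hgl; subst hhl; have := List.sizeOf_lt_of_mem ha; simp; omega)

lemma Gm.lde_cl {A : Set Gm} (hA : ∀ X ∈ A, X.IsLDE) {X : Gm} (h : Gm.cl A X) :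
    X.IsLDE := by
  induction h with
  | base h => exact hA _ h
  | leftOpt _ hg ih => rw [Gm.lde_leftOpts ih] at hg; exact absurd hg List.not_mem_nil
  | rightOpt _ hg ih => exact Gm.lde_rightOpts ih _ hg
  | add _ _ ih1 ih2 => exact Gm.lde_add _ _ ih1 ih2

lemma Gm.lde_trunc : ∀ (n : ℕ) (X : Gm), X.IsLDE → (Gm.trunc n X).IsLDE
  | 0, _, _ => Gm.IsLDE.mk [] (fun g hg => absurd hg List.not_mem_nil)
  | n+1, .node l r, h => by
    have hl : l = [] := by have := Gm.lde_leftOpts h; simpa [Gm.leftOpts] using this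
    subst hl
    rw [Gm.trunc]
    simp only [List.map_nil]
    exact Gm.IsLDE.mk _ (by
      intro g hg
      simp only [List.mem_map] at hg
      obtain ⟨a, ha, rfl⟩ := hg
      exact Gm.lde_trunc n a (Gm.lde_rightOpts h a ha))

lemma Gm.foldr_max_le {α : Type} (f : α → ℕ) :
    ∀ (L : List α), ∀ x ∈ L, f x + 1 ≤ L.foldr (fun g m => max (f g + 1) m) 0 := by
  intro L
  induction L with
  | nil => simp
  | cons a t ih =>
    intro x hx
    rcases List.mem_cons.mp hx with rfl | hx
    · simp
    · have := ih x hx; simp; omega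

lemma Gm.foldr_max_bound {α : Type} (f : α → ℕ) (b : ℕ) :
    ∀ (L : List α), (∀ x ∈ L, f x + 1 ≤ b) → L.foldr (fun g m => max (f g + 1) m) 0 ≤ b := by
  intro L
  induction L with
  | nil => simp
  | cons a t ih =>
    intro h
    have h1 := h a (by simp)
    have h2 := ih (fun x hx => h x (by simp [hx]))
    simp; omega

lemma Gm.fb_lt_left {g : Gm} {l r : List Gm} (h : g ∈ l) :
    Gm.fb g < Gm.fb (Gm.node l r) := by
  have h1 : Gm.fb g + 1 ≤ l.attach.foldr (fun x m => max (Gm.fb x.1 + 1) m) 0 :=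
    Gm.foldr_max_le (fun x : {x // x ∈ l} => Gm.fb x.1) l.attach ⟨g, h⟩ (List.mem_attach _ _)
  rw [Gm.fb]
  exact lt_of_lt_of_le (Nat.lt_of_lt_of_le (Nat.lt_succ_self _) h1) (le_max_left _ _)

lemma Gm.fb_lt_right {g : Gm} {l r : List Gm} (h : g ∈ r) :
    Gm.fb g < Gm.fb (Gm.node l r) := by
  have h1 : Gm.fb g + 1 ≤ r.attach.foldr (fun x m => max (Gm.fb x.1 + 1) m) 0 :=
    Gm.foldr_max_le (fun x : {x // x ∈ r} => Gm.fb x.1) r.attach ⟨g, h⟩ (List.mem_attach _ _)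
  rw [Gm.fb]
  exact lt_of_lt_of_le (Nat.lt_of_lt_of_le (Nat.lt_succ_self _) h1) (le_max_right _ _)

lemma Gm.fb_trunc_le : ∀ (n : ℕ) (X : Gm), Gm.fb (Gm.trunc n X) ≤ n
  | 0, _ => by rw [Gm.trunc]; simp [Gm.zero, Gm.fb]
  | n+1, .node l r => by
    rw [Gm.trunc, Gm.fb]
    apply max_le <;>
    · apply Gm.foldr_max_bound
      rintro ⟨x, hx⟩ -
      simp only [List.mem_map] at hx
      obtain ⟨a, ha, rfl⟩ := hx
      have := Gm.fb_trunc_le n a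
      show Gm.fb (Gm.trunc n a) + 1 ≤ n + 1
      omega

lemma Gm.truncMain : ∀ (N : ℕ) (G : Gm) (n : ℕ) (X : Gm), sizeOf G + n ≤ N → X.IsLDE →
    (Gm.fb G ≤ n → (Gm.lwins (G.add X) ↔ Gm.lwins (G.add (Gm.trunc n X)))) ∧
    (Gm.fb G < n → (Gm.rwins (G.add X) ↔ Gm.rwins (G.add (Gm.trunc n X)))) := by
  intro N
  induction N with
  | zero =>
    intro G n X hN hX
    exfalso
    cases G with | node l r => simp at hN
  | succ N ih =>
    intro G n X hN hX
    cases G with | node l r =>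
    have hNsize : sizeOf (Gm.node l r) + n ≤ N + 1 := hN
    have hsize : ∀ g : Gm, g ∈ l ∨ g ∈ r → sizeOf g + n ≤ N := by
      intro g hg
      have : sizeOf g < sizeOf (Gm.node l r) := by
        rcases hg with hg | hg
        exacts [Gm.sizeOf_mem_left hg, Gm.sizeOf_mem_right hg]
      omega
    have hXl : X.leftOpts = [] := Gm.lde_leftOpts hX
    have hTl : (Gm.trunc n X).leftOpts = [] := Gm.lde_leftOpts (Gm.lde_trunc n X hX)
    constructor
    · intro hfb
      rw [Gm.lwins_add, Gm.lwins_add]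
      simp only [Gm.leftOpts_node, hXl, hTl, and_true, List.not_mem_nil, false_and,
        exists_false, or_false, exists_and_left, exists_prop]
      have key : ∀ g ∈ l, (Gm.rwins (g.add X) ↔ Gm.rwins (g.add (Gm.trunc n X))) :=
        fun g hg => (ih g n X (hsize g (Or.inl hg)) hX).2
          (lt_of_lt_of_le (Gm.fb_lt_left hg) hfb)
      constructor
      · rintro (h | ⟨g, hg, h⟩)
        · exact Or.inl h
        · exact Or.inr ⟨g, hg, fun hc => h ((key g hg).mpr hc)⟩
      · rintro (h | ⟨g, hg, h⟩)
        · exact Or.inl h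
        · exact Or.inr ⟨g, hg, fun hc => h ((key g hg).mp hc)⟩
    · intro hfb
      cases n with
      | zero => omega
      | succ m =>
        cases hX with | mk xr hxr =>
        have htr : Gm.trunc (m+1) (Gm.node [] xr) = Gm.node [] (xr.map (Gm.trunc m)) := by
          rw [Gm.trunc]; simp
        rw [htr, Gm.rwins_add, Gm.rwins_add]
        simp only [Gm.rightOpts_node, List.map_eq_nil_iff, List.mem_map]
        have k1 : ∀ g ∈ r, (Gm.lwins (g.add (Gm.node [] xr)) ↔
            Gm.lwins (g.add (Gm.node [] (xr.map (Gm.trunc m))))) := by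
          intro g hg
          have := (ih g (m+1) (Gm.node [] xr) (hsize g (Or.inr hg)) (Gm.IsLDE.mk xr hxr)).1
            (le_of_lt (lt_of_lt_of_le (Gm.fb_lt_right hg) (le_of_lt hfb)))
          rwa [htr] at this
        have k2 : ∀ x ∈ xr, (Gm.lwins ((Gm.node l r).add x) ↔
            Gm.lwins ((Gm.node l r).add (Gm.trunc m x))) := by
          intro x hx
          exact (ih (Gm.node l r) m x (by omega) (hxr x hx)).1 (by omega)
        constructor
        · rintro (h | ⟨g, hg, h⟩ | ⟨x, hx, h⟩)
          · exact Or.inl h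
          · exact Or.inr (Or.inl ⟨g, hg, fun hc => h ((k1 g hg).mpr hc)⟩)
          · exact Or.inr (Or.inr ⟨_, ⟨x, hx, rfl⟩, fun hc => h ((k2 x hx).mpr hc)⟩)
        · rintro (h | ⟨g, hg, h⟩ | ⟨y, ⟨x, hx, rfl⟩, h⟩)
          · exact Or.inl h
          · exact Or.inr (Or.inl ⟨g, hg, fun hc => h ((k1 g hg).mp hc)⟩)
          · exact Or.inr (Or.inr ⟨x, hx, fun hc => h ((k2 x hx).mp hc)⟩)

lemma Gm.monoMain : ∀ (N : ℕ) (G Y Z : Gm), sizeOf G + sizeOf Y ≤ N →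
    Y.IsLDE → Z.IsLDE → Gm.DGe Y Z →
    ((G.add Z).lwins → (G.add Y).lwins) ∧ ((G.add Y).rwins → (G.add Z).rwins) := by
  intro N
  induction N with
  | zero =>
    intro G Y Z hN hY hZ hd
    exfalso
    cases G with | node l r => simp at hN
  | succ N ih =>
    intro G Y Z hN hY hZ hd
    cases G with | node l r =>
    cases hY with | mk yr hyr =>
    cases hZ with | mk zr hzr =>
    rw [Gm.dge_iff] at hd
    have hNsize : sizeOf (Gm.node l r) + sizeOf (Gm.node [] yr) ≤ N + 1 := hN
    have hsizeg : ∀ g : Gm, g ∈ l ∨ g ∈ r → sizeOf g + sizeOf (Gm.node [] yr) ≤ N := by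
      intro g hg
      have : sizeOf g < sizeOf (Gm.node l r) := by
        rcases hg with hg | hg
        exacts [Gm.sizeOf_mem_left hg, Gm.sizeOf_mem_right hg]
      omega
    have hsizey : ∀ y : Gm, y ∈ yr → sizeOf (Gm.node l r) + sizeOf y ≤ N := by
      intro y hy
      have : sizeOf y < sizeOf (Gm.node [] yr) := Gm.sizeOf_mem_right hy
      omega
    constructor
    · intro h
      rw [Gm.lwins_add] at h ⊢
      simp only [Gm.leftOpts_node, List.not_mem_nil, false_and, exists_false, or_false,
        and_true] at h ⊢
      rcases h with h | ⟨g, hg, hc⟩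
      · exact Or.inl h
      · refine Or.inr ⟨g, hg, fun hw => hc ?_⟩
        exact (ih g (Gm.node [] yr) (Gm.node [] zr) (hsizeg g (Or.inl hg))
          (Gm.IsLDE.mk yr hyr) (Gm.IsLDE.mk zr hzr) (by rw [Gm.dge_iff]; exact hd)).2 hw
    · intro h
      rw [Gm.rwins_add] at h ⊢
      simp only [Gm.rightOpts_node] at h ⊢
      rcases h with ⟨h1, h2⟩ | ⟨g, hg, hc⟩ | ⟨y, hy, hc⟩
      · exact Or.inl ⟨h1, hd.2 h2⟩
      · refine Or.inr (Or.inl ⟨g, hg, fun hw => hc ?_⟩)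
        exact (ih g (Gm.node [] yr) (Gm.node [] zr) (hsizeg g (Or.inr hg))
          (Gm.IsLDE.mk yr hyr) (Gm.IsLDE.mk zr hzr) (by rw [Gm.dge_iff]; exact hd)).1 hw
      · obtain ⟨z, hz, hdyz⟩ := hd.1 y hy
        refine Or.inr (Or.inr ⟨z, hz, fun hw => hc ?_⟩)
        exact (ih (Gm.node l r) y z (hsizey y hy) (hyr y hy) (hzr z hz) hdyz).1 hw

@[reducible] def EncT : ℕ → Type
  | 0 => PUnit
  | n+1 => Finset (EncT n)

noncomputable instance encTDecEq (n : ℕ) : DecidableEq (EncT n) := Classical.decEq _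

noncomputable instance encTFintype : ∀ n, Fintype (EncT n)
  | 0 => inferInstanceAs (Fintype PUnit.{1})
  | n+1 =>
    letI := encTFintype n
    inferInstanceAs (Fintype (Finset (EncT n)))

noncomputable def Gm.enc : (n : ℕ) → Gm → EncT n
  | 0, _ => PUnit.unit
  | n+1, .node _ r => (r.map (Gm.enc n)).toFinset

def EncT.ord : (n : ℕ) → EncT n → EncT n → Prop
  | 0, _, _ => True
  | n+1, s, t => (∀ a ∈ s, ∃ b ∈ t, EncT.ord n a b) ∧ (s = ∅ → t = ∅)

lemma EncT.ord_refl : ∀ (n : ℕ) (a : EncT n), EncT.ord n a a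
  | 0, _ => trivial
  | n+1, s => ⟨fun a ha => ⟨a, ha, EncT.ord_refl n a⟩, fun h => h⟩

lemma EncT.ord_trans : ∀ (n : ℕ) (a b c : EncT n),
    EncT.ord n a b → EncT.ord n b c → EncT.ord n a c
  | 0, _, _, _, _, _ => trivial
  | n+1, s, t, u, h1, h2 =>
    ⟨fun a ha =>
      have ⟨b, hb, hab⟩ := h1.1 a ha
      have ⟨c, hc, hbc⟩ := h2.1 b hb
      ⟨c, hc, EncT.ord_trans n a b c hab hbc⟩,
     fun h => h2.2 (h1.2 h)⟩

lemma Gm.fb_le_zero_right {l r : List Gm} (h : Gm.fb (Gm.node l r) ≤ 0) : r = [] := by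
  rw [List.eq_nil_iff_forall_not_mem]
  intro x hx
  have := Gm.fb_lt_right (l := l) hx
  omega

lemma Gm.dge_iff_ord : ∀ (n : ℕ) (X Y : Gm), Gm.fb X ≤ n → Gm.fb Y ≤ n →
    (Gm.DGe X Y ↔ EncT.ord n (Gm.enc n X) (Gm.enc n Y))
  | 0, .node xl xr, .node yl yr, hX, hY => by
    have hxr := Gm.fb_le_zero_right hX
    have hyr := Gm.fb_le_zero_right hY
    subst hxr; subst hyr
    rw [Gm.dge_iff]
    exact iff_of_true ⟨by simp, fun _ => rfl⟩ trivial
  | n+1, .node xl xr, .node yl yr, hX, hY => by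
    rw [Gm.dge_iff]
    show _ ↔ EncT.ord (n+1) ((xr.map (Gm.enc n)).toFinset) ((yr.map (Gm.enc n)).toFinset)
    rw [show EncT.ord (n+1) ((xr.map (Gm.enc n)).toFinset) ((yr.map (Gm.enc n)).toFinset) =
      ((∀ a ∈ (xr.map (Gm.enc n)).toFinset, ∃ b ∈ (yr.map (Gm.enc n)).toFinset,
          EncT.ord n a b) ∧
        ((xr.map (Gm.enc n)).toFinset = ∅ → (yr.map (Gm.enc n)).toFinset = ∅)) from rfl]
    constructor
    · rintro ⟨h1, h2⟩
      constructor
      · intro a ha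
        rw [List.mem_toFinset, List.mem_map] at ha
        obtain ⟨x, hx, rfl⟩ := ha
        obtain ⟨y, hy, hxy⟩ := h1 x hx
        refine ⟨Gm.enc n y, by rw [List.mem_toFinset, List.mem_map]; exact ⟨y, hy, rfl⟩, ?_⟩
        exact (Gm.dge_iff_ord n x y
          (by have := Gm.fb_lt_right (l := xl) hx; omega)
          (by have := Gm.fb_lt_right (l := yl) hy; omega)).mp hxy
      · intro h
        rw [List.toFinset_eq_empty_iff, List.map_eq_nil_iff] at h ⊢
        exact h2 h
    · rintro ⟨h1, h2⟩
      constructor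
      · intro x hx
        obtain ⟨b, hb, hab⟩ := h1 (Gm.enc n x)
          (by rw [List.mem_toFinset, List.mem_map]; exact ⟨x, hx, rfl⟩)
        rw [List.mem_toFinset, List.mem_map] at hb
        obtain ⟨y, hy, rfl⟩ := hb
        refine ⟨y, hy, ?_⟩
        exact (Gm.dge_iff_ord n x y
          (by have := Gm.fb_lt_right (l := xl) hx; omega)
          (by have := Gm.fb_lt_right (l := yl) hy; omega)).mpr hab
      · intro h
        subst h
        have := h2 (by simp)
        rw [List.toFinset_eq_empty_iff, List.map_eq_nil_iff] at this
        exact this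

lemma exists_min {α : Type} (S : Set α) (hfin : S.Finite) (le : α → α → Prop)
    (hrefl : ∀ a, le a a) (htr : ∀ a b c, le a b → le b c → le a c) :
    ∀ x ∈ S, ∃ m ∈ S, le m x ∧ ∀ y ∈ S, le y m → le m y := by
  classical
  have key : ∀ (k : ℕ) (x : α), x ∈ S →
      (hfin.toFinset.filter (fun y => le y x)).card ≤ k →
      ∃ m ∈ S, le m x ∧ ∀ y ∈ S, le y m → le m y := by
    intro k
    induction k with
    | zero =>
      intro x hx hcard
      exfalso
      have hxmem : x ∈ hfin.toFinset.filter (fun y => le y x) := by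
        simp only [Finset.mem_filter, Set.Finite.mem_toFinset]
        exact ⟨hx, hrefl x⟩
      have := Finset.card_pos.mpr ⟨x, hxmem⟩
      omega
    | succ k ihk =>
      intro x hx hcard
      by_cases hmin : ∀ y ∈ S, le y x → le x y
      · exact ⟨x, hx, hrefl x, hmin⟩
      · push_neg at hmin
        obtain ⟨y, hyS, hyx, hnxy⟩ := hmin
        have hsub : hfin.toFinset.filter (fun z => le z y) ⊆
            hfin.toFinset.filter (fun z => le z x) := by
          intro z hz
          simp only [Finset.mem_filter, Set.Finite.mem_toFinset] at hz ⊢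
          exact ⟨hz.1, htr _ _ _ hz.2 hyx⟩
        have hxin : x ∈ hfin.toFinset.filter (fun z => le z x) := by
          simp only [Finset.mem_filter, Set.Finite.mem_toFinset]
          exact ⟨hx, hrefl x⟩
        have hxnotin : x ∉ hfin.toFinset.filter (fun z => le z y) := by
          simp only [Finset.mem_filter, Set.Finite.mem_toFinset]
          rintro ⟨-, hc⟩
          exact hnxy hc
        have hcard2 : (hfin.toFinset.filter (fun z => le z y)).card <
            (hfin.toFinset.filter (fun z => le z x)).card :=
          Finset.card_lt_card (Finset.ssubset_iff_of_subset hsub |>.mpr ⟨x, hxin, hxnotin⟩)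
        obtain ⟨m, hmS, hmy, hmmin⟩ := ihk y hyS (by omega)
        exact ⟨m, hmS, htr _ _ _ hmy hyx, hmmin⟩
  intro x hx
  exact key _ x hx le_rfl

/-- in the universe generated by a set `A` of Left dead-ends, `G`
is Left strong (Left wins moving first on `G + X` for every Left end `X` of the
universe) iff Left wins moving first on `G + Y` for every `Y` in the `n`-th
test set, `n = fb(G)`: the minimal elements (dead-end order) of
`{τ_n(X) : X ∈ cl(A)}`. -/
theorem stmt14 (A : Set Gm) (hA : ∀ X ∈ A, X.IsLDE) (G : Gm) :
    (∀ X : Gm, Gm.cl A X → Gm.lwins (G.add X)) ↔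
    (∀ Y : Gm, (∃ X : Gm, Gm.cl A X ∧ Y = Gm.trunc G.fb X) →
      (∀ Z : Gm, (∃ X : Gm, Gm.cl A X ∧ Z = Gm.trunc G.fb X) →
        Gm.DGe Y Z → Gm.DGe Z Y) →
      Gm.lwins (G.add Y)) := by
  constructor
  · rintro hstrong Y ⟨X, hXcl, rfl⟩ -
    have hX := Gm.lde_cl hA hXcl
    exact ((Gm.truncMain (sizeOf G + G.fb) G G.fb X le_rfl hX).1 le_rfl).mp (hstrong X hXcl)
  · intro htest X hXcl
    have hX := Gm.lde_cl hA hXcl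
    rw [(Gm.truncMain (sizeOf G + G.fb) G G.fb X le_rfl hX).1 le_rfl]
    set n := G.fb with hn
    set S : Set Gm := {Z | ∃ X', Gm.cl A X' ∧ Z = Gm.trunc n X'} with hS
    set T : Set (EncT n) := Gm.enc n '' S with hT
    have hTfin : T.Finite := Set.toFinite T
    have hx0 : Gm.enc n (Gm.trunc n X) ∈ T := ⟨Gm.trunc n X, ⟨X, hXcl, rfl⟩, rfl⟩
    obtain ⟨m, hmT, hmx, hmmin⟩ := exists_min T hTfin (fun a b => EncT.ord n b a)
      (fun a => EncT.ord_refl n a)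
      (fun a b c h1 h2 => EncT.ord_trans n c b a h2 h1)
      _ hx0
    obtain ⟨Z, hZS, hZm⟩ := hmT
    obtain ⟨XZ, hXZcl, hZdef⟩ := hZS
    have hZlde : Z.IsLDE := by
      rw [hZdef]; exact Gm.lde_trunc _ _ (Gm.lde_cl hA hXZcl)
    have hfbZ : Gm.fb Z ≤ n := by rw [hZdef]; exact Gm.fb_trunc_le _ _
    have hfbT : Gm.fb (Gm.trunc n X) ≤ n := Gm.fb_trunc_le _ _
    have hge : Gm.DGe (Gm.trunc n X) Z := by
      refine (Gm.dge_iff_ord n _ _ hfbT hfbZ).mpr ?_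
      rw [hZm]; exact hmx
    have hZwins : Gm.lwins (G.add Z) := by
      apply htest Z ⟨XZ, hXZcl, hZdef⟩
      intro W hW hZW
      obtain ⟨XW, hXWcl, hWdef⟩ := hW
      have hfbW : Gm.fb W ≤ n := by rw [hWdef]; exact Gm.fb_trunc_le _ _
      have h1 : EncT.ord n (Gm.enc n Z) (Gm.enc n W) :=
        (Gm.dge_iff_ord n _ _ hfbZ hfbW).mp hZW
      have h2 := hmmin (Gm.enc n W) ⟨W, ⟨XW, hXWcl, hWdef⟩, rfl⟩ (by rw [← hZm]; exact h1)
      refine (Gm.dge_iff_ord n _ _ hfbW hfbZ).mpr ?_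
      rw [hZm]; exact h2
    exact (Gm.monoMain (sizeOf G + sizeOf (Gm.trunc n X)) G (Gm.trunc n X) Z le_rfl
      (Gm.lde_trunc _ _ hX) hZlde hge).1 hZwins
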